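/- In the real line ℝ with distance d(x, y) = |x − y|, let C = {0, 3}, A = {1/10}, and B = {29/10}. Then the symmetric Chamfer distance satisfies Ch_S(C, A ∪ B) = 2/5 while Ch_S(C, A) = Ch_S(C, B) = 31/10; in particular Ch_S(C, A ∪ B) < min(Ch_S(C, A), Ch_S(C, B)), so symmetric Chamfer-linkage is not a reducible linkage function. -/
import Mathlib


/-- The Chamfer distance from a finite set `A` to a finite nonempty set `B`:
`Ch(A, B) = Σ_{a ∈ A} min_{b ∈ B} d(a, b)`. -/
noncomputable def chamfer {X : Type*} [MetricSpace X] (A B : Finset X)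
    (hB : B.Nonempty) : ℝ :=
  ∑ a ∈ A, B.inf' hB fun b => dist a b

/-- The symmetric Chamfer distance: `Ch_S(A, B) = Ch(A, B) + Ch(B, A)`. -/
noncomputable def chamferS {X : Type*} [MetricSpace X] (A B : Finset X)
    (hA : A.Nonempty) (hB : B.Nonempty) : ℝ :=
  chamfer A B hB + chamfer B A hA

/-- In `ℝ` with `d(x, y) = |x − y|`, for `C = {0, 3}`, `A = {1/10}`, `B = {29/10}`,
one has `Ch_S(C, A ∪ B) = 2/5` while `Ch_S(C, A) = Ch_S(C, B) = 31/10`; in particular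
`Ch_S(C, A ∪ B) < min (Ch_S(C, A)) (Ch_S(C, B))`, so symmetric Chamfer-linkage is not a
reducible linkage function. -/
theorem chamferS_not_reducible :
    chamferS ({0, 3} : Finset ℝ) (({1/10} : Finset ℝ) ∪ ({29/10} : Finset ℝ))
        (Finset.insert_nonempty _ _) ((Finset.singleton_nonempty _).inl) = 2/5 ∧
    chamferS ({0, 3} : Finset ℝ) ({1/10} : Finset ℝ)
        (Finset.insert_nonempty _ _) (Finset.singleton_nonempty _) = 31/10 ∧
    chamferS ({0, 3} : Finset ℝ) ({29/10} : Finset ℝ)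
        (Finset.insert_nonempty _ _) (Finset.singleton_nonempty _) = 31/10 ∧
    chamferS ({0, 3} : Finset ℝ) (({1/10} : Finset ℝ) ∪ ({29/10} : Finset ℝ))
        (Finset.insert_nonempty _ _) ((Finset.singleton_nonempty _).inl)
      < min (chamferS ({0, 3} : Finset ℝ) ({1/10} : Finset ℝ)
              (Finset.insert_nonempty _ _) (Finset.singleton_nonempty _))
            (chamferS ({0, 3} : Finset ℝ) ({29/10} : Finset ℝ)
              (Finset.insert_nonempty _ _) (Finset.singleton_nonempty _)) := by
  have hU : (({1/10} : Finset ℝ) ∪ ({29/10} : Finset ℝ)) = ({1/10, 29/10} : Finset ℝ) := by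
    ext x; simp [or_comm]
  simp only [chamferS, chamfer, hU]
  rw [show ((0:ℝ)) = (0:ℝ) from rfl]
  norm_num [Finset.sum_insert, Finset.inf'_insert, Finset.sum_pair, Finset.inf'_singleton,
    Real.dist_eq, abs_of_nonneg, abs_of_nonpos, min_def, abs_sub_comm]
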